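/- Every finite subgroup of SL(2,ℂ) of odd order is cyclic. -/

import Mathlib

open Matrix Complex

namespace SL2OddAux

abbrev M2 := Matrix (Fin 2) (Fin 2) ℂ
abbrev SL2 := Matrix.SpecialLinearGroup (Fin 2) ℂ

lemma pow_nilp (N : M2) (hn : N * N = 0) : ∀ k : ℕ, (1 + N) ^ k = 1 + (k : ℂ) • N := by
  intro k
  induction k with
  | zero => simp
  | succ k ih =>
    rw [pow_succ, ih, add_mul, one_mul, mul_add, mul_one, smul_mul_assoc, hn, smul_zero]
    push_cast
    rw [add_smul, one_smul]
    abel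

lemma eq_one_of_trace_two (A : M2) (hd : A.det = 1) (ht : A.trace = 2) {n : ℕ}
    (hodd : Odd n) (hp : A ^ n = 1) : A = 1 := by
  have hn : (A - 1) * (A - 1) = 0 := by
    rw [Matrix.det_fin_two] at hd
    rw [Matrix.trace_fin_two] at ht
    ext i j
    fin_cases i <;> fin_cases j <;>
      simp [Matrix.mul_apply, Fin.sum_univ_two, Matrix.one_apply]
    · linear_combination A 0 0 * ht - hd
    · linear_combination A 0 1 * ht
    · linear_combination A 1 0 * ht
    · linear_combination A 1 1 * ht - hd
  have hA : A = 1 + (A - 1) := by abel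
  rw [hA, pow_nilp _ hn n] at hp
  have h0 : (n : ℂ) • (A - 1) = 0 := by
    have := hp
    rwa [add_eq_left] at this
  have hne : (n : ℂ) ≠ 0 := by
    have := hodd.pos
    exact_mod_cast this.ne'
  rw [smul_eq_zero] at h0
  rcases h0 with h | h
  · exact absurd h hne
  · rw [hA, h, add_zero]

lemma trace_sq (A : M2) (hd : A.det = 1) : (A * A).trace = A.trace ^ 2 - 2 := by
  rw [Matrix.det_fin_two] at hd
  simp [Matrix.trace_fin_two, Matrix.mul_apply, Fin.sum_univ_two]
  linear_combination -2 * hd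

lemma trace_eq_two_of_fixed (A : M2) (hd : A.det = 1) {v : Fin 2 → ℂ} (hv : v ≠ 0)
    (h : A.mulVec v = v) : A.trace = 2 := by
  have h0 : (A - 1).mulVec v = 0 := by
    rw [Matrix.sub_mulVec, Matrix.one_mulVec, h, sub_self]
  have hdet : (A - 1).det = 0 := by
    rw [← Matrix.exists_mulVec_eq_zero_iff]
    exact ⟨v, hv, h0⟩
  rw [Matrix.det_fin_two] at hdet hd
  rw [Matrix.trace_fin_two]
  simp [Matrix.sub_apply, Matrix.one_apply] at hdet
  linear_combination -hdet + hd

lemma J_conj (g : M2) (hd : g.det = 1) :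
    g * !![0, 1; -1, 0] * gᵀ = !![0, 1; -1, 0] := by
  rw [Matrix.det_fin_two] at hd
  ext i j
  fin_cases i <;> fin_cases j <;>
    simp [Matrix.mul_apply, Fin.sum_univ_two, Matrix.transpose_apply] <;>
    first
      | linear_combination hd
      | linear_combination -hd
      | linear_combination 2 * hd
      | linear_combination -2 * hd
      | ring

lemma outer_conj (g : M2) (u : Fin 2 → ℂ) :
    g * Matrix.vecMulVec u u * gᵀ = Matrix.vecMulVec (g.mulVec u) (g.mulVec u) := by
  ext i j
  fin_cases i <;> fin_cases j <;>
    simp [Matrix.mul_apply, Fin.sum_univ_two, Matrix.vecMulVec_apply, Matrix.mulVec,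
      dotProduct, Fin.sum_univ_two] <;> ring

lemma outer_eq (x u : Fin 2 → ℂ) (hu : u ≠ 0)
    (h : Matrix.vecMulVec x x = Matrix.vecMulVec u u) : x = u ∨ x = -u := by
  have h00 := congrFun (congrFun h 0) 0
  have h01 := congrFun (congrFun h 0) 1
  have h10 := congrFun (congrFun h 1) 0
  have h11 := congrFun (congrFun h 1) 1
  simp [Matrix.vecMulVec_apply] at h00 h01 h10 h11
  have hu' : u 0 ≠ 0 ∨ u 1 ≠ 0 := by
    by_contra hc
    push_neg at hc
    apply hu
    funext i; fin_cases i <;> simp [hc.1, hc.2]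
  rcases hu' with h0 | h1
  · have hx : x 0 = u 0 ∨ x 0 = -u 0 := by
      have : (x 0 - u 0) * (x 0 + u 0) = 0 := by linear_combination h00
      rcases mul_eq_zero.mp this with h | h
      · left; linear_combination h
      · right; linear_combination h
    rcases hx with h | h
    · left; funext i; fin_cases i
      · exact h
      · have hh : u 0 * x 1 = u 0 * u 1 := by linear_combination h01 - x 1 * h
        simpa using mul_left_cancel₀ h0 hh
    · right; funext i; fin_cases i
      · simpa using h
      · have hh : u 0 * x 1 = u 0 * -u 1 := by linear_combination x 1 * h - h01
        simpa using mul_left_cancel₀ h0 hh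
  · have hx : x 1 = u 1 ∨ x 1 = -u 1 := by
      have : (x 1 - u 1) * (x 1 + u 1) = 0 := by linear_combination h11
      rcases mul_eq_zero.mp this with h | h
      · left; linear_combination h
      · right; linear_combination h
    rcases hx with h | h
    · left; funext i; fin_cases i
      · have hh : u 1 * x 0 = u 1 * u 0 := by linear_combination h10 - x 0 * h
        simpa using mul_left_cancel₀ h1 hh
      · exact h
    · right; funext i; fin_cases i
      · have hh : u 1 * x 0 = u 1 * -u 0 := by linear_combination x 0 * h - h10
        simpa using mul_left_cancel₀ h1 hh
      · simpa using h

lemma trans_lit (a b c d : ℂ) : (!![a, b; c, d])ᵀ = !![a, c; b, d] := by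
  ext i j; fin_cases i <;> fin_cases j <;> rfl

lemma mulTrans (a b c d : ℂ) :
    !![a, b; c, d] * (!![a, b; c, d])ᵀ = !![a^2 + b^2, a*c + b*d; a*c + b*d, c^2 + d^2] := by
  rw [trans_lit]
  ext i j
  fin_cases i <;> fin_cases j <;>
    simp [Matrix.mul_apply, Fin.sum_univ_two] <;> ring

lemma rot_form (B : M2) (ho : B * Bᵀ = 1) (hd : B.det = 1) :
    B 1 1 = B 0 0 ∧ B 1 0 = -B 0 1 := by
  rw [Matrix.det_fin_two] at hd
  have h00 := congrFun (congrFun ho 0) 0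
  have h01 := congrFun (congrFun ho 0) 1
  simp [Matrix.mul_apply, Fin.sum_univ_two, Matrix.transpose_apply, Matrix.one_apply] at h00 h01
  constructor
  · linear_combination B 0 0 * hd + B 0 1 * h01 - B 1 1 * h00
  · linear_combination -B 0 1 * hd + B 0 0 * h01 - B 1 0 * h00

lemma matrix_lit_ext (a b c d a' b' c' d' : ℂ) (h1 : a = a') (h2 : b = b') (h3 : c = c')
    (h4 : d = d') : !![a, b; c, d] = !![a', b'; c', d'] := by rw [h1, h2, h3, h4]

lemma cholesky (S : M2) (hs : S 1 0 = S 0 1) (hd : S.det ≠ 0) :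
    ∃ A : M2, A.det ≠ 0 ∧ A * Aᵀ = S := by
  have hSlit : S = !![S 0 0, S 0 1; S 0 1, S 1 1] := by
    ext i j; fin_cases i <;> fin_cases j <;> simp [hs]
  rw [Matrix.det_fin_two, hs] at hd
  by_cases ha : S 0 0 ≠ 0
  · obtain ⟨r, hr⟩ := IsAlgClosed.exists_pow_nat_eq (k := ℂ) (S 0 0) (n := 2) (by norm_num)
    obtain ⟨s, hsq⟩ := IsAlgClosed.exists_pow_nat_eq (k := ℂ)
      ((S 0 0 * S 1 1 - S 0 1 * S 0 1) / S 0 0) (n := 2) (by norm_num)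
    have hr0 : r ≠ 0 := by
      intro h; rw [h] at hr; simp at hr; exact ha hr.symm
    have hs0 : s ≠ 0 := by
      intro h
      rw [h] at hsq
      simp only [ne_eq, zero_pow, OfNat.ofNat_ne_zero, not_false_eq_true] at hsq
      rw [eq_comm, div_eq_zero_iff] at hsq
      tauto
    refine ⟨!![r, 0; S 0 1 / r, s], ?_, ?_⟩
    · rw [Matrix.det_fin_two]; simp [hr0, hs0]
    · rw [mulTrans, hSlit]
      simp only [Matrix.of_apply, Matrix.cons_val', Matrix.cons_val_zero, Matrix.cons_val_one,
        Matrix.empty_val', Matrix.cons_val_fin_one]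
      apply matrix_lit_ext
      · linear_combination hr
      · field_simp
        ring
      · field_simp
        ring
      · have hsq' : s ^ 2 * S 0 0 = S 0 0 * S 1 1 - S 0 1 * S 0 1 :=
          (div_eq_iff ha).mp hsq.symm |>.symm
        field_simp
        linear_combination (s ^ 2 - S 1 1) * hr + hsq'
  · push_neg at ha
    have hb : S 0 1 ≠ 0 := by
      intro h; apply hd; rw [ha, h]; ring
    set z := (S 0 1 + S 1 1 / S 0 1) / 2 with hz
    set w := -I * (S 0 1 - S 1 1 / S 0 1) / 2 with hw
    refine ⟨!![1, I; z, w], ?_, ?_⟩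
    · rw [Matrix.det_fin_two_of]
      have hdetA : (1 : ℂ) * w - I * z = -I * S 0 1 := by rw [hz, hw]; ring
      rw [hdetA]
      simp [Complex.I_ne_zero, hb]
    · rw [mulTrans, hSlit, hz, hw]
      apply matrix_lit_ext
      · rw [ha]; linear_combination Complex.I_sq
      · field_simp
        linear_combination (-S 0 1 * S 0 1 + S 1 1) * Complex.I_sq
      · field_simp
        linear_combination (-S 0 1 * S 0 1 + S 1 1) * Complex.I_sq
      · field_simp
        linear_combination (S 0 1 ^ 2 - S 1 1) ^ 2 * Complex.I_sq

lemma vecMulVec_fin2 (a b : ℂ) :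
    Matrix.vecMulVec ![a, b] ![a, b] = !![a*a, a*b; b*a, b*b] := by
  ext i j; fin_cases i <;> fin_cases j <;> simp [Matrix.vecMulVec_apply]

lemma smul_fin2 (c : ℂ) (S : M2) :
    c • S = !![c * S 0 0, c * S 0 1; c * S 1 0, c * S 1 1] := by
  ext i j; fin_cases i <;> fin_cases j <;> simp

lemma traceSq_split (A : M2) : A.trace ^ 2 =
    (A * (!![1,0;0,0] : M2) * Aᵀ) 0 0 + (A * (!![0,1;0,0] : M2) * Aᵀ) 0 1 +
    (A * (!![0,0;1,0] : M2) * Aᵀ) 1 0 + (A * (!![0,0;0,1] : M2) * Aᵀ) 1 1 := by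
  simp [Matrix.trace_fin_two, Matrix.mul_apply, Fin.sum_univ_two, Matrix.transpose_apply]
  ring

end SL2OddAux

open SL2OddAux

/-- Every finite subgroup of `SL(2,ℂ)` of odd order is cyclic. -/
theorem stmt_19 (G : Subgroup (Matrix.SpecialLinearGroup (Fin 2) ℂ))
    (hfin : Finite G) (hodd : Odd (Nat.card G)) : IsCyclic G := by
  classical
  haveI := Fintype.ofFinite G
  set n := Nat.card G with hn
  have hnpos : 0 < n := Nat.card_pos
  have hnz : (n : ℂ) ≠ 0 := Nat.cast_ne_zero.mpr hnpos.ne'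
  set m : G → M2 := fun g => ((g : SL2) : M2) with hm
  have hmmul : ∀ g h : G, m (g * h) = m g * m h := fun g h => rfl
  have hdet : ∀ g : G, (m g).det = 1 := fun g => (g : SL2).2
  have hpow : ∀ g : G, (m g) ^ n = 1 := by
    intro g
    have h1 : g ^ n = 1 := pow_card_eq_one'
    have h2 : ((g : SL2) ^ n) = 1 := by rw [← SubgroupClass.coe_pow, h1]; rfl
    calc (m g) ^ n = (((g : SL2) ^ n : SL2) : M2) := by
          rw [Matrix.SpecialLinearGroup.coe_pow]
    _ = 1 := by rw [h2]; rfl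
  -- Step 0: a common fixed nonzero vector forces the group to be trivial.
  have key : ∀ v : Fin 2 → ℂ, v ≠ 0 → (∀ g : G, (m g).mulVec v = v) → IsCyclic G := by
    intro v hv hfix
    have hsub : ∀ g : G, g = 1 := by
      intro g
      have ht := trace_eq_two_of_fixed (m g) (hdet g) hv (hfix g)
      have h1 := eq_one_of_trace_two (m g) (hdet g) ht hodd (hpow g)
      exact Subtype.ext (Subtype.ext (by simpa using h1))
    haveI : Subsingleton G := ⟨fun a b => by rw [hsub a, hsub b]⟩
    infer_instance
  -- reindexing over the group
  have reidx : ∀ (f : G → M2) (h : G), ∑ g : G, f (h * g) = ∑ g : G, f g := fun f h =>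
    Fintype.sum_equiv (Equiv.mulLeft h) _ _ (fun _ => rfl)
  -- Step 1: the averaged matrix.
  set M : M2 := ∑ g : G, m g with hM
  by_cases hM0 : M ≠ 0
  · -- a nonzero column of M is a common fixed vector
    have hex : ∃ k l, M k l ≠ 0 := by
      by_contra hc
      push_neg at hc
      apply hM0
      ext i j
      simpa using hc i j
    obtain ⟨k, l, hkl⟩ := hex
    set v : Fin 2 → ℂ := fun i => M i l with hv
    apply key v
    · intro hv0
      exact hkl (by simpa [hv] using congrFun hv0 k)
    · intro h
      have hMfix : m h * M = M := by
        rw [hM, Finset.mul_sum]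
        calc ∑ g : G, m h * m g = ∑ g : G, m (h * g) := by
              refine Finset.sum_congr rfl fun g _ => ?_
              rw [hmmul]
        _ = ∑ g : G, m g := reidx (fun g => m g) h
      funext i
      have := congrFun (congrFun hMfix i) l
      simpa [Matrix.mul_apply, Matrix.mulVec, dotProduct, hv] using this
  · push_neg at hM0
    -- sum of traces is zero
    have hS : ∑ g : G, (m g).trace = 0 := by
      rw [← Matrix.trace_sum, ← hM, hM0, Matrix.trace_zero]
    -- squaring identity
    have hT : ∑ g : G, (m g).trace ^ 2 = 2 * n := by
      have h1 : ∀ g : G, (m g).trace ^ 2 = (m (g ^ 2)).trace + 2 := by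
        intro g
        have : m (g ^ 2) = m g * m g := by rw [pow_two, hmmul]
        rw [this, trace_sq _ (hdet g)]
        ring
      have h2 : ∑ g : G, (m (g ^ 2)).trace = ∑ g : G, (m g).trace :=
        Fintype.sum_equiv (powCoprime hodd.coprime_two_right) _ _ (fun _ => rfl)
      calc ∑ g : G, (m g).trace ^ 2 = ∑ g : G, ((m (g ^ 2)).trace + 2) := by
            exact Finset.sum_congr rfl fun g _ => h1 g
      _ = (∑ g : G, (m (g ^ 2)).trace) + (Finset.univ (α := G)).card • (2 : ℂ) := by
            rw [Finset.sum_add_distrib, Finset.sum_const]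
      _ = 0 + (Fintype.card G : ℕ) • (2 : ℂ) := by
            rw [h2, hS, Finset.card_univ]
      _ = 2 * n := by
            rw [hn, Nat.card_eq_fintype_card, nsmul_eq_mul]
            ring
    -- the averaging operator on bilinear forms
    set Φ : M2 → M2 := fun C => ∑ g : G, m g * C * (m g)ᵀ with hΦ
    have hΦinv : ∀ (C : M2) (h : G), m h * Φ C * (m h)ᵀ = Φ C := by
      intro C h
      simp only [hΦ, Finset.mul_sum, Finset.sum_mul]
      calc ∑ g : G, m h * (m g * C * (m g)ᵀ) * (m h)ᵀ
          = ∑ g : G, m (h * g) * C * (m (h * g))ᵀ := by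
            refine Finset.sum_congr rfl fun g _ => ?_
            rw [hmmul, Matrix.transpose_mul]
            noncomm_ring
      _ = ∑ g : G, m g * C * (m g)ᵀ := reidx (fun g => m g * C * (m g)ᵀ) h
    have hΦtrans : ∀ C : M2, (Φ C)ᵀ = Φ Cᵀ := by
      intro C
      simp only [hΦ]
      rw [Matrix.transpose_sum]
      refine Finset.sum_congr rfl fun g _ => ?_
      rw [Matrix.transpose_mul, Matrix.transpose_mul, Matrix.transpose_transpose]
      noncomm_ring
    have hΦadd : ∀ C D : M2, Φ (C + D) = Φ C + Φ D := by
      intro C D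
      simp only [hΦ]
      rw [← Finset.sum_add_distrib]
      refine Finset.sum_congr rfl fun g _ => ?_
      noncomm_ring
    have hΦJ : Φ !![0, 1; -1, 0] = (n : ℂ) • !![0, 1; -1, 0] := by
      simp only [hΦ]
      calc ∑ g : G, m g * !![0, 1; -1, 0] * (m g)ᵀ
          = ∑ _g : G, !![(0 : ℂ), 1; -1, 0] := by
            exact Finset.sum_congr rfl fun g _ => J_conj _ (hdet g)
      _ = (n : ℂ) • !![0, 1; -1, 0] := by
            rw [Finset.sum_const, Finset.card_univ]
            rw [hn, Nat.card_eq_fintype_card, ← Nat.cast_smul_eq_nsmul ℂ]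
    -- main dichotomy: some symmetric average is nonzero
    have hsymcase : ∀ S : M2, S ≠ 0 → S 1 0 = S 0 1 → (∀ g : G, m g * S * (m g)ᵀ = S) →
        IsCyclic G := by
      intro S hS0 hsym hinv
      by_cases hdS : S.det = 0
      · -- rank one: common eigenvector with character ±1, odd order kills the sign
        have hd2 : S 0 1 * S 0 1 = S 0 0 * S 1 1 := by
          rw [Matrix.det_fin_two, hsym] at hdS
          linear_combination -hdS
        have hrank : ∃ u : Fin 2 → ℂ, u ≠ 0 ∧ ∃ c : ℂ, c ≠ 0 ∧ Matrix.vecMulVec u u = c • S := by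
          by_cases ha : S 0 0 ≠ 0
          · refine ⟨![S 0 0, S 0 1], ?_, S 0 0, ha, ?_⟩
            · intro h0
              exact ha (by simpa using congrFun h0 0)
            · rw [vecMulVec_fin2, smul_fin2]
              apply matrix_lit_ext
              · ring
              · ring
              · rw [hsym]; ring
              · linear_combination hd2
          · push_neg at ha
            by_cases hc : S 1 1 ≠ 0
            · refine ⟨![S 0 1, S 1 1], ?_, S 1 1, hc, ?_⟩
              · intro h0
                exact hc (by simpa using congrFun h0 1)
              · rw [vecMulVec_fin2, smul_fin2]
                apply matrix_lit_ext
                · linear_combination hd2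
                · ring
                · rw [hsym]
                · ring
            · push_neg at hc
              exfalso
              apply hS0
              have hb : S 0 1 = 0 := by
                have h0 : S 0 1 * S 0 1 = 0 := by rw [hd2, ha, zero_mul]
                exact mul_self_eq_zero.mp h0
              have hlit : S = !![0, 0; 0, 0] := by
                rw [Matrix.eta_fin_two S, hsym, ha, hb, hc]
              rw [hlit]
              ext i j
              fin_cases i <;> fin_cases j <;> simp
        obtain ⟨u, hu0, c, hc0, huu⟩ := hrank
        apply key u hu0
        intro g
        have houter : Matrix.vecMulVec ((m g).mulVec u) ((m g).mulVec u) =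
            Matrix.vecMulVec u u := by
          rw [← outer_conj, huu]
          rw [Matrix.mul_smul, Matrix.smul_mul, hinv g]
        rcases outer_eq _ _ hu0 houter with h | h
        · exact h
        · -- sign -1 contradicts odd order
          exfalso
          have hiter : ∀ k : ℕ, ((m g) ^ k).mulVec u = ((-1 : ℂ) ^ k) • u := by
            intro k
            induction k with
            | zero => simp
            | succ k ih =>
              rw [pow_succ, pow_succ, ← Matrix.mulVec_mulVec, h]
              have hneg : (-u : Fin 2 → ℂ) = (-1 : ℂ) • u := by funext i; simp
              rw [hneg, Matrix.mulVec_smul, ih, smul_smul, mul_comm]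
          have := hiter n
          rw [hpow g, Matrix.one_mulVec, hodd.neg_one_pow] at this
          have : (2 : ℂ) • u = 0 := by
            have h2 : u = -u := by
              calc u = (-1 : ℂ) • u := this
              _ = -u := by simp
            rw [two_smul]
            nth_rewrite 2 [h2]
            simp
          exact hu0 (by simpa using this)
      · -- nondegenerate: conjugate into the complex rotation group, embed into ℂ
        obtain ⟨A, hA0, hAA⟩ := cholesky S hsym hdS
        have hAu : IsUnit A.det := isUnit_iff_ne_zero.mpr hA0
        have hA1 : A * A⁻¹ = 1 := Matrix.mul_nonsing_inv A hAu
        have hA2 : A⁻¹ * A = 1 := Matrix.nonsing_inv_mul A hAu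
        have hATu : IsUnit Aᵀ.det := by rwa [Matrix.det_transpose]
        have hAT1 : Aᵀ * Aᵀ⁻¹ = 1 := Matrix.mul_nonsing_inv _ hATu
        set B : G → M2 := fun g => A⁻¹ * m g * A with hB
        have hBmul : ∀ g k : G, B (g * k) = B g * B k := by
          intro g k
          simp only [hB]
          rw [hmmul]
          calc A⁻¹ * (m g * m k) * A = A⁻¹ * m g * (A * A⁻¹) * m k * A := by
                rw [hA1]; noncomm_ring
          _ = A⁻¹ * m g * A * (A⁻¹ * m k * A) := by noncomm_ring
        have hB1 : B 1 = 1 := by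
          have h1' : m (1 : G) = 1 := rfl
          simp only [hB]
          rw [h1', mul_one, hA2]
        have hBort : ∀ g : G, B g * (B g)ᵀ = 1 := by
          intro g
          simp only [hB]
          rw [Matrix.transpose_mul, Matrix.transpose_mul, Matrix.transpose_nonsing_inv]
          calc A⁻¹ * m g * A * (Aᵀ * ((m g)ᵀ * Aᵀ⁻¹))
              = A⁻¹ * (m g * (A * Aᵀ) * (m g)ᵀ) * Aᵀ⁻¹ := by noncomm_ring
          _ = A⁻¹ * (A * Aᵀ) * Aᵀ⁻¹ := by rw [hAA, hinv g]
          _ = 1 := by rw [← mul_assoc, hA2, one_mul, hAT1]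
        have hBdet : ∀ g : G, (B g).det = 1 := by
          intro g
          simp only [hB]
          rw [Matrix.det_mul, Matrix.det_mul, hdet g, mul_one, Matrix.det_nonsing_inv,
            Ring.inverse_eq_inv']
          exact inv_mul_cancel₀ hA0
        have hrot : ∀ g : G, B g 1 1 = B g 0 0 ∧ B g 1 0 = -(B g 0 1) :=
          fun g => rot_form (B g) (hBort g) (hBdet g)
        have hnorm : ∀ g : G, B g 0 0 ^ 2 + B g 0 1 ^ 2 = 1 := by
          intro g
          have hd' := hBdet g
          rw [Matrix.det_fin_two, (hrot g).1, (hrot g).2] at hd'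
          linear_combination hd'
        set φ : G → ℂ := fun g => B g 0 0 + I * B g 0 1 with hφ
        have hφmul : ∀ g k : G, φ (g * k) = φ g * φ k := by
          intro g k
          simp only [hφ]
          rw [hBmul]
          rw [Matrix.mul_apply, Matrix.mul_apply]
          rw [Fin.sum_univ_two, Fin.sum_univ_two]
          rw [(hrot k).1, (hrot k).2]
          ring_nf
          linear_combination -(B g 0 1 * B k 0 1) * Complex.I_sq
        have hφone : φ 1 = 1 := by
          simp only [hφ]
          rw [hB1]
          simp [Matrix.one_apply]
        have hφinj : Function.Injective φ := by
          intro g k heq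
          have hginv : (B g 0 0 + I * B g 0 1) * (B g 0 0 - I * B g 0 1) = 1 := by
            linear_combination hnorm g - (B g 0 1 ^ 2) * Complex.I_sq
          have hkinv : (B k 0 0 + I * B k 0 1) * (B k 0 0 - I * B k 0 1) = 1 := by
            linear_combination hnorm k - (B k 0 1 ^ 2) * Complex.I_sq
          have heq' : (B g 0 0 + I * B g 0 1) = (B k 0 0 + I * B k 0 1) := heq
          have hne : (B g 0 0 + I * B g 0 1) ≠ 0 := by
            intro h0
            rw [h0, zero_mul] at hginv
            exact zero_ne_one hginv
          have hminus : B g 0 0 - I * B g 0 1 = B k 0 0 - I * B k 0 1 := by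
            apply mul_left_cancel₀ hne
            rw [hginv, heq', hkinv]
          have h00 : B g 0 0 = B k 0 0 := by linear_combination (heq' + hminus) / 2
          have h01 : B g 0 1 = B k 0 1 := by
            have hI2 : I * 2 ≠ 0 := by simp [Complex.I_ne_zero]
            apply mul_left_cancel₀ hI2
            linear_combination heq' - hminus + 2 * h00 - h00 * 2
          have hBeq : B g = B k := by
            rw [Matrix.eta_fin_two (B g), Matrix.eta_fin_two (B k), (hrot g).1, (hrot g).2,
              (hrot k).1, (hrot k).2, h00, h01]
          have hmeq : m g = m k := by
            have h1 : A * B g * A⁻¹ = A * B k * A⁻¹ := by rw [hBeq]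
            have h2 : ∀ x : G, A * B x * A⁻¹ = m x := by
              intro x
              simp only [hB]
              calc A * (A⁻¹ * m x * A) * A⁻¹ = (A * A⁻¹) * m x * (A * A⁻¹) := by noncomm_ring
              _ = m x := by rw [hA1]; noncomm_ring
            rw [h2, h2] at h1
            exact h1
          exact Subtype.ext (Subtype.ext hmeq)
        exact isCyclic_of_subgroup_isDomain (R := ℂ)
          { toFun := φ, map_one' := hφone, map_mul' := hφmul } hφinj
    -- Now produce such an S from the counting identity.
    have hΦsym : ∀ C : M2, Cᵀ = C → (Φ C) 1 0 = (Φ C) 0 1 := by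
      intro C hCt
      have h := hΦtrans C
      rw [hCt] at h
      have h' := congrFun (congrFun h 0) 1
      simpa [Matrix.transpose_apply] using h'
    by_cases h1 : Φ !![1, 0; 0, 0] = 0
    · by_cases h2 : Φ !![0, 0; 0, 1] = 0
      · by_cases h3 : Φ !![0, 1; 1, 0] = 0
        · exfalso
          have hsplit : ∑ g : G, (m g).trace ^ 2 =
              (Φ !![1,0;0,0]) 0 0 + (Φ !![0,1;0,0]) 0 1 +
              (Φ !![0,0;1,0]) 1 0 + (Φ !![0,0;0,1]) 1 1 := by
            simp only [hΦ, Matrix.sum_apply]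
            rw [← Finset.sum_add_distrib, ← Finset.sum_add_distrib, ← Finset.sum_add_distrib]
            exact Finset.sum_congr rfl fun g _ => traceSq_split (m g)
          have hE01 : !![(0:ℂ),1;-1,0] + !![0,0;1,0] = !![0,1;0,0] := by
            ext i j; fin_cases i <;> fin_cases j <;> simp
          have hEsym : !![(0:ℂ),1;0,0] + !![0,0;1,0] = !![0,1;1,0] := by
            ext i j; fin_cases i <;> fin_cases j <;> simp
          have hsum : Φ !![0,1;0,0] + Φ !![0,0;1,0] = 0 := by
            rw [← hΦadd, hEsym, h3]
          have hYeq : Φ !![(0:ℂ),0;1,0] = -(Φ !![0,1;0,0]) :=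
            (neg_eq_of_add_eq_zero_right hsum).symm
          have hXval : Φ !![(0:ℂ),1;0,0] = (n : ℂ) • !![0,1;-1,0] + Φ !![0,0;1,0] := by
            rw [← hΦJ, ← hΦadd, hE01]
          have h2X : Φ !![(0:ℂ),1;0,0] + Φ !![0,1;0,0] = (n : ℂ) • !![0,1;-1,0] := by
            nth_rewrite 1 [hXval]
            rw [hYeq]
            abel
          have e1 : Φ !![(0:ℂ),1;0,0] 0 1 = (n : ℂ) / 2 := by
            have h := congrFun (congrFun h2X 0) 1
            simp [Matrix.add_apply, Matrix.smul_apply] at h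
            linear_combination h / 2
          have e2 : Φ !![(0:ℂ),0;1,0] 1 0 = (n : ℂ) / 2 := by
            have h := congrFun (congrFun h2X 1) 0
            simp [Matrix.add_apply, Matrix.smul_apply] at h
            rw [hYeq]
            simp only [Matrix.neg_apply]
            linear_combination -h / 2
          rw [hsplit, h1, h2, e1, e2] at hT
          simp at hT
          apply hnz
          linear_combination -hT
        · refine hsymcase _ h3 (hΦsym _ ?_) (fun g => hΦinv _ g)
          ext i j; fin_cases i <;> fin_cases j <;> simp
      · refine hsymcase _ h2 (hΦsym _ ?_) (fun g => hΦinv _ g)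
        ext i j; fin_cases i <;> fin_cases j <;> simp
    · refine hsymcase _ h1 (hΦsym _ ?_) (fun g => hΦinv _ g)
      ext i j; fin_cases i <;> fin_cases j <;> simp
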